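/- Let P ⊆ ℝ^n be a polytope and let φ : ℝ^n → ℝ be a P-admissible convex function. Then for every u ∈ P the supremum φ*(u) = sup_{x ∈ ℝ^n} (⟨u, x⟩ − φ(x)) is finite, and the restriction of the Legendre transform φ* to P is a convex and continuous function on P. -/

import Mathlib

open Set Topology

/-- The support function `Ψ_P(x) = sup_{u ∈ P} ⟨u, x⟩` of a set `P ⊆ ℝ^n`. -/
noncomputable def suppFn {n : ℕ} (P : Set (Fin n → ℝ)) (x : Fin n → ℝ) : ℝ :=
  sSup ((fun u => ∑ i, u i * x i) '' P)

/-- The Legendre transform `φ*(u) = sup_{x ∈ ℝ^n} (⟨u, x⟩ − φ(x))`. -/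
noncomputable def legendre {n : ℕ} (φ : (Fin n → ℝ) → ℝ) (u : Fin n → ℝ) : ℝ :=
  sSup (Set.range fun x => (∑ i, u i * x i) - φ x)

/-- Key continuity lemma: a convex function on a polytope which is bounded and is a
pointwise sup of continuous minorants (hence lsc) is continuous on the polytope. -/
lemma aux_cont {n : ℕ} (S : Finset (Fin n → ℝ)) (hS : S.Nonempty)
    (F : (Fin n → ℝ) → ℝ) (C : ℝ) (hC0 : 0 ≤ C)
    (hconv : ConvexOn ℝ (convexHull ℝ (↑S : Set (Fin n → ℝ))) F)
    (hub : ∀ u ∈ convexHull ℝ (↑S : Set (Fin n → ℝ)), F u ≤ C)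
    (hlb : ∀ u ∈ convexHull ℝ (↑S : Set (Fin n → ℝ)), -C ≤ F u)
    (hlsc : ∀ u₀ ∈ convexHull ℝ (↑S : Set (Fin n → ℝ)), ∀ ε > 0, ∃ g : (Fin n → ℝ) → ℝ,
      Continuous g ∧ (∀ u ∈ convexHull ℝ (↑S : Set (Fin n → ℝ)), g u ≤ F u) ∧ F u₀ - ε < g u₀) :
    ContinuousOn F (convexHull ℝ (↑S : Set (Fin n → ℝ))) := by
  classical
  set P : Set (Fin n → ℝ) := convexHull ℝ (↑S : Set (Fin n → ℝ)) with hPdef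
  haveI : Nonempty {x // x ∈ S} := ⟨⟨hS.choose, hS.choose_spec⟩⟩
  set A : ({x // x ∈ S} → ℝ) → (Fin n → ℝ) :=
    fun w => ∑ s : {x // x ∈ S}, w s • (s : Fin n → ℝ) with hAdef
  set K : Set ({x // x ∈ S} → ℝ) := stdSimplex ℝ {x // x ∈ S} with hKdef
  have hAcont : Continuous A := by
    apply continuous_finset_sum
    intro s _
    exact (continuous_apply s).smul continuous_const
  have himg : A '' K = P := by
    apply Set.Subset.antisymm
    · rintro _ ⟨w, hw, rfl⟩
      have h := Finset.centerMass_mem_convexHull (Finset.univ : Finset {x // x ∈ S})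
        (w := w) (fun s _ => hw.1 s) (by rw [hw.2]; norm_num)
        (z := fun s => (s : Fin n → ℝ)) (s := (↑S : Set (Fin n → ℝ)))
        (fun s _ => s.2)
      rwa [Finset.centerMass_eq_of_sum_1 _ _ hw.2] at h
    · intro u hu
      rw [hPdef, Finset.convexHull_eq] at hu
      obtain ⟨w, hw0, hw1, hwc⟩ := hu
      refine ⟨fun s => w (s : Fin n → ℝ), ⟨fun s => hw0 _ s.2, ?_⟩, ?_⟩
      · rw [Finset.sum_coe_sort S w]; exact hw1
      · rw [hAdef]
        rw [← hwc, Finset.centerMass_eq_of_sum_1 _ _ hw1]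
        simp only [id]
        exact Finset.sum_coe_sort S (fun y => w y • y)
  -- main estimate: continuity of F ∘ A on K
  have hGcont : ContinuousOn (F ∘ A) K := by
    rw [Metric.continuousOn_iff]
    intro l₀ hl₀ ε hε
    have hAl₀ : A l₀ ∈ P := himg ▸ Set.mem_image_of_mem A hl₀
    -- lower estimate via lsc
    obtain ⟨g, hgcont, hgle, hggt⟩ := hlsc (A l₀) hAl₀ (ε/2) (by linarith)
    have hgA : ContinuousAt (g ∘ A) l₀ := (hgcont.comp hAcont).continuousAt
    rw [Metric.continuousAt_iff] at hgA
    obtain ⟨δ₁, hδ₁, hgA⟩ := hgA (ε/2) (by linarith)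
    -- upper estimate setup
    have hTex : ∃ s, 0 < l₀ s := by
      by_contra h
      push_neg at h
      have : (1:ℝ) ≤ 0 := hl₀.2 ▸ Finset.sum_nonpos (fun s _ => h s)
      linarith
    set T : Finset {x // x ∈ S} := Finset.univ.filter (fun s => 0 < l₀ s) with hTdef
    have hTne : T.Nonempty := by
      obtain ⟨s, hs⟩ := hTex
      exact ⟨s, by simp [hTdef, hs]⟩
    set m : ℝ := T.inf' hTne l₀ with hmdef
    have hm : 0 < m := by
      rw [hmdef, Finset.lt_inf'_iff]
      intro s hs
      exact (Finset.mem_filter.mp hs).2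
    have hmle : ∀ s, 0 < l₀ s → m ≤ l₀ s := fun s hs =>
      Finset.inf'_le _ (Finset.mem_filter.mpr ⟨Finset.mem_univ s, hs⟩)
    set t₀ : ℝ := min 1 (ε/(2*(C+1))) with ht₀def
    have ht₀pos : 0 < t₀ := lt_min one_pos (by positivity)
    have ht₀le1 : t₀ ≤ 1 := min_le_left _ _
    have h2Ct : 2*C*t₀ < ε := by
      rcases le_or_gt (1:ℝ) (ε/(2*(C+1))) with h | h
      · have ht : t₀ = 1 := min_eq_left h
        have h2 : 2*(C+1) ≤ ε := by
          rw [le_div_iff₀ (by positivity : (0:ℝ) < 2*(C+1))] at h; linarith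
        rw [ht]; linarith
      · have ht : t₀ = ε/(2*(C+1)) := min_eq_right h.le
        have hq : ε = t₀ * (2*(C+1)) := by
          rw [ht]; field_simp
        rw [hq]
        nlinarith [ht₀pos]
    set δ₂ : ℝ := m * t₀ with hδ₂def
    have hδ₂pos : 0 < δ₂ := mul_pos hm ht₀pos
    refine ⟨min δ₁ δ₂, lt_min hδ₁ hδ₂pos, ?_⟩
    intro l hl hdist
    have hAl : A l ∈ P := himg ▸ Set.mem_image_of_mem A hl
    have hdist₁ : dist l l₀ < δ₁ := lt_of_lt_of_le hdist (min_le_left _ _)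
    have hdist₂ : dist l l₀ < δ₂ := lt_of_lt_of_le hdist (min_le_right _ _)
    have hcoord : ∀ s, |l s - l₀ s| < δ₂ := by
      intro s
      have := (dist_pi_lt_iff hδ₂pos).mp hdist₂ s
      rwa [Real.dist_eq] at this
    -- lower bound
    have hlow : F (A l₀) - ε < F (A l) := by
      have h1 : dist (g (A l)) (g (A l₀)) < ε/2 := hgA hdist₁
      rw [Real.dist_eq, abs_sub_lt_iff] at h1
      have h2 : g (A l) ≤ F (A l) := hgle _ hAl
      linarith [h1.2]
    -- upper bound
    have hupp : F (A l) < F (A l₀) + ε := by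
      set μ : {x // x ∈ S} → ℝ := fun s => l₀ s + (l s - l₀ s)/t₀ with hμdef
      have hμK : μ ∈ K := by
        constructor
        · intro s
          have hrw : μ s = (t₀ * l₀ s + (l s - l₀ s))/t₀ := by
            rw [hμdef]; field_simp
          rw [hrw]
          apply div_nonneg _ ht₀pos.le
          rcases (hl₀.1 s).lt_or_eq with hpos | hzero
          · have h1 : m ≤ l₀ s := hmle s hpos
            have h2 : l₀ s - l s < δ₂ := lt_of_le_of_lt (le_abs_self _) (by
              rw [abs_sub_comm]; exact hcoord s)
            have h3 : δ₂ ≤ t₀ * l₀ s := by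
              rw [hδ₂def, mul_comm]
              exact mul_le_mul_of_nonneg_left h1 ht₀pos.le
            linarith
          · rw [← hzero]
            simpa using hl.1 s
        · show ∑ s, μ s = 1
          rw [hμdef]
          simp only []
          rw [Finset.sum_add_distrib, ← Finset.sum_div, Finset.sum_sub_distrib, hl.2, hl₀.2]
          simp
      have hAμ : A μ ∈ P := himg ▸ Set.mem_image_of_mem A hμK
      have hAsum : A l = (1 - t₀) • A l₀ + t₀ • A μ := by
        rw [hAdef]
        simp only [Finset.smul_sum, smul_smul]
        rw [← Finset.sum_add_distrib]
        apply Finset.sum_congr rfl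
        intro s _
        rw [← add_smul]
        congr 1
        rw [hμdef]
        field_simp
        ring
      have h1 : F (A l) ≤ (1 - t₀) * F (A l₀) + t₀ * F (A μ) := by
        rw [hAsum]
        have := hconv.2 hAl₀ hAμ (by linarith : (0:ℝ) ≤ 1 - t₀) ht₀pos.le (by ring)
        simpa [smul_eq_mul] using this
      have e1 : t₀ * F (A μ) ≤ t₀ * C := mul_le_mul_of_nonneg_left (hub _ hAμ) ht₀pos.le
      have e2 : t₀ * (-C) ≤ t₀ * F (A l₀) := mul_le_mul_of_nonneg_left (hlb _ hAl₀) ht₀pos.le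
      nlinarith
    rw [Real.dist_eq, abs_sub_lt_iff]
    constructor <;> [skip; skip] <;> simp only [Function.comp_apply] <;> linarith
  -- transfer continuity from K to P via the quotient map
  rw [continuousOn_iff_continuous_restrict]
  have hKcomp : IsCompact K := isCompact_stdSimplex _ _
  haveI : CompactSpace ↥K := isCompact_iff_compactSpace.mp hKcomp
  let e : ↥K → ↥P := fun k => ⟨A k, himg ▸ Set.mem_image_of_mem A k.2⟩
  have he : Continuous e := Continuous.subtype_mk (hAcont.comp continuous_subtype_val) _
  have hesurj : Function.Surjective e := by
    rintro ⟨u, hu⟩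
    rw [← himg] at hu
    obtain ⟨w, hw, hwu⟩ := hu
    exact ⟨⟨w, hw⟩, Subtype.ext hwu⟩
  have hq : IsQuotientMap e := IsQuotientMap.of_surjective_continuous hesurj he
  rw [hq.continuous_iff]
  exact continuousOn_iff_continuous_restrict.mp hGcont

/-- if `P` is a polytope and `φ` is a `P`-admissible convex function, then for
every `u ∈ P` the defining supremum of `φ*(u)` is finite (bounded above), and `φ*` restricted
to `P` is convex and continuous. -/
theorem stmt_0 {n : ℕ} (P : Set (Fin n → ℝ))
    (hP : ∃ S : Finset (Fin n → ℝ), S.Nonempty ∧ P = convexHull ℝ (S : Set (Fin n → ℝ)))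
    (φ : (Fin n → ℝ) → ℝ) (hφconv : ConvexOn ℝ Set.univ φ)
    (hadm : ∃ C : ℝ, ∀ x, |φ x - suppFn P x| ≤ C) :
    (∀ u ∈ P, BddAbove (Set.range fun x => (∑ i, u i * x i) - φ x)) ∧
    ConvexOn ℝ P (legendre φ) ∧ ContinuousOn (legendre φ) P := by
  classical
  obtain ⟨S, hSne, hPeq⟩ := hP
  subst hPeq
  obtain ⟨C, hC⟩ := hadm
  set P : Set (Fin n → ℝ) := convexHull ℝ (S : Set (Fin n → ℝ)) with hPdef
  have hC0 : 0 ≤ C := le_trans (abs_nonneg _) (hC 0)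
  have hPne : P.Nonempty :=
    ⟨hSne.choose, subset_convexHull ℝ _ (Finset.mem_coe.mpr hSne.choose_spec)⟩
  have hPcomp : IsCompact P := S.finite_toSet.isCompact_convexHull ℝ
  have hdotcont : ∀ x : Fin n → ℝ, Continuous (fun u : Fin n → ℝ => ∑ i, u i * x i) :=
    fun x => continuous_finset_sum _ fun i _ => (continuous_apply i).mul continuous_const
  have hΨle : ∀ x : Fin n → ℝ, ∀ u ∈ P, (∑ i, u i * x i) ≤ suppFn P x := fun x u hu =>
    le_csSup (hPcomp.image (hdotcont x)).bddAbove (Set.mem_image_of_mem _ hu)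
  have hφlb : ∀ x, suppFn P x - C ≤ φ x := fun x => by
    have := (abs_le.mp (hC x)).1; linarith
  have hφub : ∀ x, φ x ≤ suppFn P x + C := fun x => by
    have := (abs_le.mp (hC x)).2; linarith
  have hΨ0 : suppFn P 0 = 0 := by
    have hfn : (fun u : Fin n → ℝ => ∑ i, u i * (0 : Fin n → ℝ) i) = fun _ => (0:ℝ) := by
      funext u; simp
    rw [suppFn, hfn, hPne.image_const, csSup_singleton]
  have key1 : ∀ u ∈ P, ∀ x, (∑ i, u i * x i) - φ x ≤ C := by
    intro u hu x
    have h1 := hΨle x u hu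
    have h2 := hφlb x
    linarith
  have hbdd : ∀ u ∈ P, BddAbove (Set.range fun x => (∑ i, u i * x i) - φ x) := by
    intro u hu
    exact ⟨C, by rintro _ ⟨x, rfl⟩; exact key1 u hu x⟩
  have hFub : ∀ u ∈ P, legendre φ u ≤ C := by
    intro u hu
    exact csSup_le (Set.range_nonempty _) (by rintro _ ⟨x, rfl⟩; exact key1 u hu x)
  have hFlb : ∀ u ∈ P, -C ≤ legendre φ u := by
    intro u hu
    have h0 : (∑ i, u i * (0 : Fin n → ℝ) i) - φ 0 ≤ legendre φ u :=
      le_csSup (hbdd u hu) ⟨0, rfl⟩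
    have hs : (∑ i, u i * (0 : Fin n → ℝ) i) = 0 := by simp
    have h2 := hφub 0
    rw [hΨ0] at h2
    rw [hs] at h0
    linarith
  have hFconv : ConvexOn ℝ P (legendre φ) := by
    refine ⟨convex_convexHull ℝ _, ?_⟩
    intro u hu v hv a b ha hb hab
    apply csSup_le (Set.range_nonempty _)
    rintro _ ⟨x, rfl⟩
    have h1 : (∑ i, u i * x i) - φ x ≤ legendre φ u := le_csSup (hbdd u hu) ⟨x, rfl⟩
    have h2 : (∑ i, v i * x i) - φ x ≤ legendre φ v := le_csSup (hbdd v hv) ⟨x, rfl⟩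
    have hdot : (∑ i, (a • u + b • v) i * x i)
        = a * (∑ i, u i * x i) + b * (∑ i, v i * x i) := by
      rw [Finset.mul_sum, Finset.mul_sum, ← Finset.sum_add_distrib]
      apply Finset.sum_congr rfl
      intro i _
      simp only [Pi.add_apply, Pi.smul_apply, smul_eq_mul]
      ring
    have e1 := mul_le_mul_of_nonneg_left h1 ha
    have e2 := mul_le_mul_of_nonneg_left h2 hb
    rw [mul_sub] at e1 e2
    have hφx : a * φ x + b * φ x = φ x := by rw [← add_mul, hab, one_mul]
    simp only [smul_eq_mul]
    rw [hdot]
    linarith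
  refine ⟨hbdd, hFconv, ?_⟩
  apply aux_cont S hSne (legendre φ) C hC0 hFconv hFub hFlb
  intro u₀ hu₀ ε hε
  have hlt : legendre φ u₀ - ε < sSup (Set.range fun x => (∑ i, u₀ i * x i) - φ x) := by
    have : legendre φ u₀ = sSup (Set.range fun x => (∑ i, u₀ i * x i) - φ x) := rfl
    linarith [this ▸ (by linarith : legendre φ u₀ - ε < legendre φ u₀)]
  obtain ⟨y, ⟨x, rfl⟩, hy⟩ := exists_lt_of_lt_csSup (Set.range_nonempty _) hlt
  exact ⟨fun u => (∑ i, u i * x i) - φ x, (hdotcont x).sub continuous_const,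
    fun u hu => le_csSup (hbdd u hu) ⟨x, rfl⟩, hy⟩
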